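/- For α ∈ X*, let θ_α : X → X* be the affine map θ_α(x) = ω(x) + α. Then, for any subset S ⊆ X: the affine transvection group Tr^α(S) acts on the set X/ker ω of cosets of ker ω, the set im θ_α is invariant under the dual transvection group Tr(S)*, and θ_α induces a group isomorphism from the permutation group induced by Tr^α(S) on X/ker ω to the restriction of Tr(S)* to im θ_α. -/

import Mathlib

/-- Symplectic transvections as permutations. -/
def transvectionSet {K X : Type*} [Field K] [AddCommGroup X] [Module K X]
    (ω : X →ₗ[K] X →ₗ[K] K) (S : Set X) : Set (Equiv.Perm X) :=
  {f | ∃ s ∈ S, ∃ k : K, k ≠ 0 ∧ ∀ x, f x = x + (k * ω x s) • s}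

/-- The transvection group `Tr(S)`. -/
def transvectionGroup {K X : Type*} [Field K] [AddCommGroup X] [Module K X]
    (ω : X →ₗ[K] X →ₗ[K] K) (S : Set X) : Subgroup (Equiv.Perm X) :=
  Subgroup.closure (transvectionSet ω S)

/-- Affine transvections `T^{α(s)}_{s,k} : x ↦ x + k(ω(x,s) + α(s))·s`. -/
def affTransvectionSet {K X : Type*} [Field K] [AddCommGroup X] [Module K X]
    (ω : X →ₗ[K] X →ₗ[K] K) (S : Set X) (α : X → K) : Set (Equiv.Perm X) :=
  {f | ∃ s ∈ S, ∃ k : K, k ≠ 0 ∧ ∀ x, f x = x + (k * (ω x s + α s)) • s}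

/-- The affine transvection group `Tr^α(S)`. -/
def affTransvectionGroup {K X : Type*} [Field K] [AddCommGroup X] [Module K X]
    (ω : X →ₗ[K] X →ₗ[K] K) (S : Set X) (α : X → K) : Subgroup (Equiv.Perm X) :=
  Subgroup.closure (affTransvectionSet ω S α)

/-- A transvection-like map `x ↦ x + k(ω(x,s)+a)·s` as a permutation. -/
def trvE {K X : Type*} [Field K] [AddCommGroup X] [Module K X]
    (ω : X →ₗ[K] X →ₗ[K] K) (halt : ∀ x, ω x x = 0) (s : X) (k a : K) :
    Equiv.Perm X where
  toFun x := x + (k * (ω x s + a)) • s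
  invFun x := x + (-k * (ω x s + a)) • s
  left_inv x := by
    simp only [map_add, map_smul, LinearMap.add_apply, LinearMap.smul_apply, smul_eq_mul,
      halt s]
    module
  right_inv x := by
    simp only [map_add, map_smul, LinearMap.add_apply, LinearMap.smul_apply, smul_eq_mul,
      halt s]
    module

/-- with `θ_α : X → X*`, `θ_α(x) = ω(x) + α`: for any `S ⊆ X`,
the affine transvection group `Tr^α(S)` acts on `X/ker ω` (it preserves the
fibers of `ω : X → X*`), `im θ_α` is `Tr(S)*`-invariant, and `θ_α` induces a
group isomorphism from `Tr^α(S)` on `X/ker ω` to the restriction of `Tr(S)*`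
to `im θ_α` (expressed by the intertwining conditions in both directions). -/
theorem stmt7 {K X : Type*} [Field K] [AddCommGroup X] [Module K X]
    [FiniteDimensional K X]
    (ω : X →ₗ[K] X →ₗ[K] K) (halt : ∀ x, ω x x = 0)
    (α : Module.Dual K X) (S : Set X) :
    ∀ θα : X → Module.Dual K X, θα = (fun x => ω x + α) →
    -- `Tr^α(S)` acts on `X / ker ω`
    ((∀ g ∈ affTransvectionGroup ω S ⇑α, ∀ x x' : X,
        ω x = ω x' ↔ ω (g x) = ω (g x')) ∧
    -- `im θ_α` is `Tr(S)*`-invariant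
    (∀ h ∈ transvectionGroup ω S, ∀ x : X, ∃ x' : X,
        ∀ z, θα x (h z) = θα x' z) ∧
    -- `θ_α` intertwines the two actions in both directions
    (∀ g ∈ affTransvectionGroup ω S ⇑α, ∃ h ∈ transvectionGroup ω S,
        ∀ x z, θα (g x) z = θα x (h z)) ∧
    (∀ h ∈ transvectionGroup ω S, ∃ g ∈ affTransvectionGroup ω S ⇑α,
        ∀ x z, θα (g x) z = θα x (h z))) := by
  intro θα hθ
  subst hθ
  have skew : ∀ x y : X, ω x y = -ω y x := by
    intro x y
    have h := halt (x + y)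
    simp only [map_add, LinearMap.add_apply, halt] at h
    linear_combination h
  -- the intertwining relation
  set R : Equiv.Perm X → Equiv.Perm X → Prop :=
    fun g h => ∀ x z, (ω (g x) + α) z = (ω x + α) (h z) with hR
  have Rone : R 1 1 := fun x z => rfl
  have Rmul : ∀ g₁ g₂ h₁ h₂, R g₁ h₁ → R g₂ h₂ → R (g₁ * g₂) (h₂ * h₁) := by
    intro g₁ g₂ h₁ h₂ r₁ r₂ x z
    have e1 := r₁ (g₂ x) z
    have e2 := r₂ x (h₁ z)
    simp only [Equiv.Perm.mul_apply] at *
    rw [e1, e2]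
  have Rinv : ∀ g h, R g h → R g⁻¹ h⁻¹ := by
    intro g h r x z
    have := r (g⁻¹ x) (h⁻¹ z)
    simp only [Equiv.Perm.inv_def, Equiv.apply_symm_apply] at this
    exact this.symm
  -- generator cases
  have genA : ∀ g ∈ affTransvectionSet ω S ⇑α,
      ∃ h ∈ transvectionGroup ω S, R g h := by
    rintro g ⟨s, hs, k, hk, hg⟩
    refine ⟨trvE ω halt s (-k) 0, Subgroup.subset_closure
      ⟨s, hs, -k, neg_ne_zero.2 hk, fun x => by simp [trvE]⟩, ?_⟩
    intro x z
    simp only [hg, trvE, Equiv.coe_fn_mk, add_zero, map_add, map_smul,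
      LinearMap.add_apply, LinearMap.smul_apply, smul_eq_mul, skew s z]
    ring
  have genB : ∀ h ∈ transvectionSet ω S,
      ∃ g ∈ affTransvectionGroup ω S ⇑α, R g h := by
    rintro h ⟨s, hs, k, hk, hh⟩
    refine ⟨trvE ω halt s (-k) (α s), Subgroup.subset_closure
      ⟨s, hs, -k, neg_ne_zero.2 hk, fun x => by simp [trvE]⟩, ?_⟩
    intro x z
    simp only [hh, trvE, Equiv.coe_fn_mk, map_add, map_smul,
      LinearMap.add_apply, LinearMap.smul_apply, smul_eq_mul, skew s z]
    ring
  -- closure inductions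
  have claimA : ∀ g ∈ affTransvectionGroup ω S ⇑α,
      ∃ h ∈ transvectionGroup ω S, R g h := by
    intro g hg
    refine Subgroup.closure_induction genA ⟨1, one_mem _, Rone⟩ ?_ ?_ hg
    · rintro g₁ g₂ _ _ ⟨h₁, hm₁, r₁⟩ ⟨h₂, hm₂, r₂⟩
      exact ⟨h₂ * h₁, mul_mem hm₂ hm₁, Rmul g₁ g₂ h₁ h₂ r₁ r₂⟩
    · rintro g _ ⟨h, hm, r⟩
      exact ⟨h⁻¹, inv_mem hm, Rinv g h r⟩
  have claimB : ∀ h ∈ transvectionGroup ω S,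
      ∃ g ∈ affTransvectionGroup ω S ⇑α, R g h := by
    intro h hh
    refine Subgroup.closure_induction genB ⟨1, one_mem _, Rone⟩ ?_ ?_ hh
    · rintro h₁ h₂ _ _ ⟨g₁, hm₁, r₁⟩ ⟨g₂, hm₂, r₂⟩
      exact ⟨g₂ * g₁, mul_mem hm₂ hm₁, Rmul g₂ g₁ h₂ h₁ r₂ r₁⟩
    · rintro h _ ⟨g, hm, r⟩
      exact ⟨g⁻¹, inv_mem hm, Rinv g h r⟩
  have fwd : ∀ g ∈ affTransvectionGroup ω S ⇑α, ∀ x x' : X,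
      ω x = ω x' → ω (g x) = ω (g x') := by
    intro g hg x x' hxx
    obtain ⟨h, _, r⟩ := claimA g hg
    ext z
    have e1 := r x z
    have e2 := r x' z
    simp only [LinearMap.add_apply, hxx] at e1 e2
    exact add_right_cancel (e1.trans e2.symm)
  refine ⟨?_, ?_, claimA, claimB⟩
  · intro g hg x x'
    constructor
    · exact fwd g hg x x'
    · intro hgx
      have := fwd g⁻¹ (inv_mem hg) (g x) (g x') hgx
      simpa using this
  · intro h hh x
    obtain ⟨g, _, r⟩ := claimB h hh
    exact ⟨g x, fun z => (r x z).symm⟩
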